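/- Let K ∈ ℝ, N ≥ 1, ℓ > 0 (with 2ℓ < π/√K if K > 0), and let q : (−ℓ, ℓ) → (0, ∞) satisfy ∫_{−ℓ}^{ℓ} q(t) dt = 1 and q(t) ≥ q(0) · s_K(ℓ − t)^{N−1}/s_K(ℓ)^{N−1} for t ∈ [0, ℓ), and q(t) ≥ q(0) · s_K(ℓ + t)^{N−1}/s_K(ℓ)^{N−1} for t ∈ (−ℓ, 0]. Then q(0) ≤ s_K(ℓ)^{N−1} / (2 ∫_0^{ℓ} s_K(τ)^{N−1} dτ). -/
import Mathlib

open MeasureTheory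

/-- The comparison function `s_K` of the measure contraction property. -/
noncomputable def sK (K t : ℝ) : ℝ :=
  if 0 < K then Real.sin (Real.sqrt K * t) / Real.sqrt K
  else if K = 0 then t
  else Real.sinh (Real.sqrt (-K) * t) / Real.sqrt (-K)

lemma sK_cont (K : ℝ) : Continuous (sK K) := by
  unfold sK
  split_ifs with h1 h2
  · exact (Real.continuous_sin.comp (continuous_const.mul continuous_id)).div_const _
  · exact continuous_id
  · exact (Real.continuous_sinh.comp (continuous_const.mul continuous_id)).div_const _

lemma sK_pos (K t : ℝ) (ht : 0 < t) (hK : 0 < K → Real.sqrt K * t < Real.pi) :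
    0 < sK K t := by
  unfold sK
  split_ifs with h1 h2
  · exact div_pos (Real.sin_pos_of_pos_of_lt_pi (mul_pos (Real.sqrt_pos.2 h1) ht) (hK h1))
      (Real.sqrt_pos.2 h1)
  · exact ht
  · have hK' : 0 < -K := by
      push_neg at h1
      rcases lt_or_eq_of_le h1 with h | h
      · linarith
      · exact absurd h h2
    exact div_pos (Real.sinh_pos_iff.2 (mul_pos (Real.sqrt_pos.2 hK') ht)) (Real.sqrt_pos.2 hK')

/-- If `q` is a probability density on `(-ℓ, ℓ)` satisfying the MCP-type lower bounds
`q(t) ≥ q(0) (s_K(ℓ-t)/s_K(ℓ))^{N-1}` on `[0, ℓ)` and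
`q(t) ≥ q(0) (s_K(ℓ+t)/s_K(ℓ))^{N-1}` on `(-ℓ, 0]`, then
`q(0) ≤ s_K(ℓ)^{N-1} / (2 ∫₀^ℓ s_K(τ)^{N-1} dτ)`. -/
theorem stmt13 (K N ℓ : ℝ) (hN : 1 ≤ N) (hℓ : 0 < ℓ)
    (hKℓ : 0 < K → 2 * ℓ < Real.pi / Real.sqrt K)
    (q : ℝ → ℝ)
    (hnorm : ∫ t in Set.Ioo (-ℓ) ℓ, q t = 1)
    (hright : ∀ t ∈ Set.Ico (0 : ℝ) ℓ,
      q 0 * (sK K (ℓ - t) ^ (N - 1) / sK K ℓ ^ (N - 1)) ≤ q t)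
    (hleft : ∀ t ∈ Set.Ioc (-ℓ) (0 : ℝ),
      q 0 * (sK K (ℓ + t) ^ (N - 1) / sK K ℓ ^ (N - 1)) ≤ q t) :
    q 0 ≤ sK K ℓ ^ (N - 1) / (2 * ∫ τ in (0 : ℝ)..ℓ, sK K τ ^ (N - 1)) := by
  have hr : (0:ℝ) ≤ N - 1 := by linarith
  -- positivity facts
  have hKlt : ∀ t : ℝ, 0 < t → t ≤ ℓ → (0 < K → Real.sqrt K * t < Real.pi) := by
    intro t ht htl hK
    have h1 := hKℓ hK
    have hs : 0 < Real.sqrt K := Real.sqrt_pos.2 hK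
    rw [lt_div_iff₀ hs] at h1
    nlinarith [Real.pi_pos]
  have hSpos : 0 < sK K ℓ := sK_pos K ℓ hℓ (hKlt ℓ hℓ le_rfl)
  have hS : 0 < sK K ℓ ^ (N - 1) := Real.rpow_pos_of_pos hSpos _
  have hcont : Continuous (fun t : ℝ => sK K t ^ (N - 1)) :=
    (sK_cont K).rpow_const (fun x => Or.inr hr)
  have hI : 0 < ∫ τ in (0:ℝ)..ℓ, sK K τ ^ (N - 1) := by
    apply intervalIntegral.intervalIntegral_pos_of_pos_on
      (hcont.intervalIntegrable 0 ℓ)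
    · intro x hx
      exact Real.rpow_pos_of_pos (sK_pos K x hx.1 (hKlt x hx.1 hx.2.le)) _
    · exact hℓ
  -- integrability of q
  have hq_int : IntegrableOn q (Set.Ioo (-ℓ) ℓ) := by
    by_contra h
    rw [integral_undef h] at hnorm
    norm_num at hnorm
  -- the comparison function
  set g : ℝ → ℝ := fun t => q 0 * (sK K (ℓ - |t|) ^ (N - 1) / sK K ℓ ^ (N - 1)) with hg_def
  have hg_cont : Continuous g := by
    apply continuous_const.mul
    apply Continuous.div_const
    exact ((sK_cont K).comp (continuous_const.sub continuous_abs)).rpow_const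
      (fun x => Or.inr hr)
  have hg_int : IntegrableOn g (Set.Ioo (-ℓ) ℓ) :=
    (hg_cont.integrableOn_Icc).mono_set Set.Ioo_subset_Icc_self
  have hmono : (∫ t in Set.Ioo (-ℓ) ℓ, g t) ≤ ∫ t in Set.Ioo (-ℓ) ℓ, q t := by
    apply setIntegral_mono_on hg_int hq_int measurableSet_Ioo
    intro t ht
    rcases le_or_gt 0 t with h0 | h0
    · have : |t| = t := abs_of_nonneg h0
      rw [hg_def]; simp only [this]
      exact hright t ⟨h0, ht.2⟩
    · have : |t| = -t := abs_of_neg h0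
      rw [hg_def]; simp only [this, sub_neg_eq_add]
      exact hleft t ⟨ht.1, h0.le⟩
  -- compute the integral of g
  have hcomp : (∫ t in Set.Ioo (-ℓ) ℓ, g t)
      = q 0 * (2 * ∫ τ in (0:ℝ)..ℓ, sK K τ ^ (N - 1)) / sK K ℓ ^ (N - 1) := by
    rw [← integral_Ioc_eq_integral_Ioo, ← intervalIntegral.integral_of_le (by linarith : -ℓ ≤ ℓ)]
    have h1 : (∫ t in (-ℓ)..ℓ, g t)
        = (q 0 / sK K ℓ ^ (N - 1)) * ∫ t in (-ℓ)..ℓ, sK K (ℓ - |t|) ^ (N - 1) := by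
      rw [← intervalIntegral.integral_const_mul]
      apply intervalIntegral.integral_congr
      intro t _
      rw [hg_def]; ring
    rw [h1]
    have h2 : (∫ t in (-ℓ)..ℓ, sK K (ℓ - |t|) ^ (N - 1))
        = 2 * ∫ t in (0:ℝ)..ℓ, sK K (ℓ - t) ^ (N - 1) := by
      have hsplit : (∫ t in (-ℓ)..ℓ, sK K (ℓ - |t|) ^ (N - 1))
          = (∫ t in (-ℓ)..(0:ℝ), sK K (ℓ - |t|) ^ (N - 1))
            + ∫ t in (0:ℝ)..ℓ, sK K (ℓ - |t|) ^ (N - 1) := by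
        rw [intervalIntegral.integral_add_adjacent_intervals]
        · exact (hcont.comp (continuous_const.sub continuous_abs)).intervalIntegrable _ _
        · exact (hcont.comp (continuous_const.sub continuous_abs)).intervalIntegrable _ _
      rw [hsplit]
      have hL : (∫ t in (-ℓ)..(0:ℝ), sK K (ℓ - |t|) ^ (N - 1))
          = ∫ t in (0:ℝ)..ℓ, sK K (ℓ - t) ^ (N - 1) := by
        have heq : Set.EqOn (fun t : ℝ => sK K (ℓ - |t|) ^ (N - 1))
            (fun t : ℝ => sK K (ℓ - (-t)) ^ (N - 1)) (Set.uIcc (-ℓ) (0:ℝ)) := by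
          intro t htmem
          rw [Set.uIcc_of_le (by linarith : -ℓ ≤ (0:ℝ))] at htmem
          simp only [abs_of_nonpos htmem.2]
        rw [intervalIntegral.integral_congr heq,
          intervalIntegral.integral_comp_neg (fun t : ℝ => sK K (ℓ - t) ^ (N - 1))]
        norm_num
      have hR : (∫ t in (0:ℝ)..ℓ, sK K (ℓ - |t|) ^ (N - 1))
          = ∫ t in (0:ℝ)..ℓ, sK K (ℓ - t) ^ (N - 1) := by
        apply intervalIntegral.integral_congr
        intro t htmem
        rw [Set.uIcc_of_le (by linarith : (0:ℝ) ≤ ℓ)] at htmem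
        simp only [abs_of_nonneg htmem.1]
      rw [hL, hR]; ring
    have h3 : (∫ t in (0:ℝ)..ℓ, sK K (ℓ - t) ^ (N - 1))
        = ∫ τ in (0:ℝ)..ℓ, sK K τ ^ (N - 1) := by
      have := intervalIntegral.integral_comp_sub_left (a := (0:ℝ)) (b := ℓ)
        (fun τ => sK K τ ^ (N - 1)) ℓ
      simpa using this
    rw [h2, h3]; ring
  rw [hcomp, hnorm] at hmono
  have h2I : 0 < 2 * ∫ τ in (0:ℝ)..ℓ, sK K τ ^ (N - 1) := by linarith
  rw [div_le_one hS] at hmono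
  rw [le_div_iff₀ h2I]
  exact hmono
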